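/- Define the correlation λ_g(u,v) = 2^{-d1} Σ_{x ∈ F_2^{d1}} (−1)^{v·g(x) + u·x} for g : F_2^{d1} → F_2^{d2}. For F(x) = T(x + Bᵀ f(Ax)) with A Bᵀ = 0, T invertible, A full rank with right inverse R_A: if α + Tᵀβ ∉ rowspace(A) then λ_F(α, β) = 0, and if α + Tᵀβ ∈ rowspace(A) then λ_F(α, β) = λ_f(R_Aᵀ(α + Tᵀβ), B Tᵀ β). -/

import Mathlib

open Matrix

/-- Sign character of F_2. -/
noncomputable def chi (b : ZMod 2) : ℝ := if b = 0 then 1 else -1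

/-- Linear correlation of a vectorial boolean function. -/
noncomputable def corr {d1 d2 : ℕ} (g : (Fin d1 → ZMod 2) → (Fin d2 → ZMod 2))
    (u : Fin d1 → ZMod 2) (v : Fin d2 → ZMod 2) : ℝ :=
  (∑ x : Fin d1 → ZMod 2, chi (dotProduct v (g x) + dotProduct u x)) / 2 ^ d1

lemma chi_zero : chi 0 = 1 := by simp [chi]

lemma chi_one : chi 1 = -1 := by norm_num [chi]

lemma chi_add (a b : ZMod 2) : chi (a + b) = chi a * chi b := by
  have h : ∀ x : ZMod 2, x = 0 ∨ x = 1 := by decide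
  rcases h a with rfl | rfl <;> rcases h b with rfl | rfl <;>
    simp [chi, show (1 : ZMod 2) + 1 = 0 from rfl]

lemma zmod2_add_eq_zero {a b : ZMod 2} (h : a + b = 0) : a = b := by
  revert h; revert a b; decide

lemma zmod2_ne_zero {a : ZMod 2} (h : a ≠ 0) : a = 1 := by
  revert h; revert a; decide

lemma vec_add_self {d : ℕ} (v : Fin d → ZMod 2) : v + v = 0 := by
  funext i
  show v i + v i = 0
  have : ∀ a : ZMod 2, a + a = 0 := by decide
  exact this _

lemma tdot {p q : ℕ} (M : Matrix (Fin p) (Fin q) (ZMod 2)) (u : Fin p → ZMod 2)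
    (x : Fin q → ZMod 2) : Mᵀ.mulVec u ⬝ᵥ x = u ⬝ᵥ M.mulVec x := by
  rw [dotProduct_comm, dotProduct_mulVec, vecMul_transpose, dotProduct_comm]

lemma tdot' {p q : ℕ} (M : Matrix (Fin p) (Fin q) (ZMod 2)) (u : Fin q → ZMod 2)
    (v : Fin p → ZMod 2) : u ⬝ᵥ Mᵀ.mulVec v = M.mulVec u ⬝ᵥ v := by
  rw [dotProduct_comm, tdot, dotProduct_comm]

section aux

variable {d d1 : ℕ} (A : Matrix (Fin d1) (Fin d) (ZMod 2))
  (RA : Matrix (Fin d) (Fin d1) (ZMod 2))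

/-- Decomposition of the domain via the kernel of `A`. -/
def kerEquiv (hRA : A * RA = 1) :
    ((Fin d1 → ZMod 2) × {k : Fin d → ZMod 2 // A.mulVec k = 0}) ≃ (Fin d → ZMod 2) where
  toFun p := RA.mulVec p.1 + p.2.1
  invFun x := ⟨A.mulVec x, ⟨x + RA.mulVec (A.mulVec x), by
    rw [Matrix.mulVec_add, Matrix.mulVec_mulVec, hRA, Matrix.one_mulVec]
    exact vec_add_self _⟩⟩
  left_inv := by
    rintro ⟨y, k, hk⟩
    have hA2 : A.mulVec (RA.mulVec y + k) = y := by
      rw [Matrix.mulVec_add, Matrix.mulVec_mulVec, hRA, Matrix.one_mulVec, hk, add_zero]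
    ext i
    · simp [hA2]
    · show (RA.mulVec y + k + RA.mulVec (A.mulVec (RA.mulVec y + k))) i = k i
      rw [hA2]
      have : RA.mulVec y + k + RA.mulVec y = k := by
        rw [add_comm (RA.mulVec y) k, add_assoc, vec_add_self, add_zero]
      rw [this]
  right_inv := by
    intro x
    show RA.mulVec (A.mulVec x) + (x + RA.mulVec (A.mulVec x)) = x
    rw [add_comm x, ← add_assoc, vec_add_self, zero_add]

lemma sum_factor {d2 : ℕ} (hRA : A * RA = 1)
    (f : (Fin d1 → ZMod 2) → (Fin d2 → ZMod 2))
    (γ : Fin d → ZMod 2) (w : Fin d2 → ZMod 2) :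
    ∑ x : Fin d → ZMod 2, chi (γ ⬝ᵥ x + w ⬝ᵥ f (A.mulVec x))
      = (∑ k : {k : Fin d → ZMod 2 // A.mulVec k = 0}, chi (γ ⬝ᵥ k.1))
        * ∑ y : Fin d1 → ZMod 2, chi (γ ⬝ᵥ RA.mulVec y + w ⬝ᵥ f y) := by
  set F : (Fin d → ZMod 2) → ℝ := fun x => chi (γ ⬝ᵥ x + w ⬝ᵥ f (A.mulVec x)) with hF
  calc ∑ x : Fin d → ZMod 2, F x
      = ∑ p : (Fin d1 → ZMod 2) × {k : Fin d → ZMod 2 // A.mulVec k = 0},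
          F (kerEquiv A RA hRA p) := (Equiv.sum_comp (kerEquiv A RA hRA) F).symm
    _ = ∑ y : Fin d1 → ZMod 2, ∑ k : {k : Fin d → ZMod 2 // A.mulVec k = 0},
          chi (γ ⬝ᵥ k.1) * chi (γ ⬝ᵥ RA.mulVec y + w ⬝ᵥ f y) := by
        rw [Fintype.sum_prod_type]
        refine Finset.sum_congr rfl fun y _ => Finset.sum_congr rfl fun k _ => ?_
        show chi (γ ⬝ᵥ (RA.mulVec y + k.1) + w ⬝ᵥ f (A.mulVec (RA.mulVec y + k.1))) = _
        have hA2 : A.mulVec (RA.mulVec y + k.1) = y := by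
          rw [Matrix.mulVec_add, Matrix.mulVec_mulVec, hRA, Matrix.one_mulVec, k.2, add_zero]
        rw [hA2, dotProduct_add]
        rw [show γ ⬝ᵥ RA.mulVec y + γ ⬝ᵥ k.1 + w ⬝ᵥ f y
              = γ ⬝ᵥ k.1 + (γ ⬝ᵥ RA.mulVec y + w ⬝ᵥ f y) by ring]
        rw [chi_add]
    _ = _ := by
        simp_rw [← Finset.sum_mul]
        rw [← Finset.mul_sum, mul_comm]

lemma K_zero (γ k0 : Fin d → ZMod 2) (hk0 : A.mulVec k0 = 0) (hne : γ ⬝ᵥ k0 ≠ 0) :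
    (∑ k : {k : Fin d → ZMod 2 // A.mulVec k = 0}, chi (γ ⬝ᵥ k.1)) = 0 := by
  have h1 : γ ⬝ᵥ k0 = 1 := zmod2_ne_zero hne
  set S := ∑ k : {k : Fin d → ZMod 2 // A.mulVec k = 0}, chi (γ ⬝ᵥ k.1) with hS
  have hmem : ∀ k : {k : Fin d → ZMod 2 // A.mulVec k = 0}, A.mulVec (k.1 + k0) = 0 := by
    intro k; rw [Matrix.mulVec_add, k.2, hk0, add_zero]
  let e : {k : Fin d → ZMod 2 // A.mulVec k = 0} ≃ {k : Fin d → ZMod 2 // A.mulVec k = 0} :=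
    { toFun := fun k => ⟨k.1 + k0, hmem k⟩
      invFun := fun k => ⟨k.1 + k0, hmem k⟩
      left_inv := by
        intro k; ext1
        show k.1 + k0 + k0 = k.1
        rw [add_assoc, vec_add_self, add_zero]
      right_inv := by
        intro k; ext1
        show k.1 + k0 + k0 = k.1
        rw [add_assoc, vec_add_self, add_zero] }
  have h2 : ∑ k : {k : Fin d → ZMod 2 // A.mulVec k = 0}, chi (γ ⬝ᵥ (e k).1) = S :=
    Equiv.sum_comp e (fun k => chi (γ ⬝ᵥ k.1))
  have h3 : ∀ k : {k : Fin d → ZMod 2 // A.mulVec k = 0},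
      chi (γ ⬝ᵥ (e k).1) = - chi (γ ⬝ᵥ k.1) := by
    intro k
    show chi (γ ⬝ᵥ (k.1 + k0)) = _
    rw [dotProduct_add, chi_add, h1, chi_one]
    ring
  rw [Finset.sum_congr rfl (fun k _ => h3 k), Finset.sum_neg_distrib] at h2
  linarith

lemma range_of_perp (hRA : A * RA = 1) (γ : Fin d → ZMod 2)
    (h : ∀ k, A.mulVec k = 0 → γ ⬝ᵥ k = 0) :
    Aᵀ.mulVec (RAᵀ.mulVec γ) = γ := by
  have key : ∀ x, Aᵀ.mulVec (RAᵀ.mulVec γ) ⬝ᵥ x = γ ⬝ᵥ x := by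
    intro x
    have hker : A.mulVec (x + RA.mulVec (A.mulVec x)) = 0 := by
      rw [Matrix.mulVec_add, Matrix.mulVec_mulVec, hRA, Matrix.one_mulVec]
      exact vec_add_self _
    have h0 := h _ hker
    rw [dotProduct_add] at h0
    have h1 : γ ⬝ᵥ x = γ ⬝ᵥ RA.mulVec (A.mulVec x) := zmod2_add_eq_zero h0
    rw [tdot, tdot, ← h1]
  funext i
  have := key (Pi.single i 1)
  simpa [dotProduct_single] using this

lemma perp_of_range (γ : Fin d → ZMod 2) (hγ : γ ∈ Set.range Aᵀ.mulVec) :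
    ∀ k, A.mulVec k = 0 → γ ⬝ᵥ k = 0 := by
  rintro k hk
  obtain ⟨a, ha⟩ := hγ
  rw [← ha, tdot, hk, dotProduct_zero]

end aux

/-- the correlations of F vanish off the row space of A, and otherwise
reduce to correlations of f. -/
theorem corr_reduction (n N Ni No : ℕ)
    (f : (Fin (Ni * n) → ZMod 2) → (Fin (No * n) → ZMod 2))
    (T Tinv : Matrix (Fin (N * n)) (Fin (N * n)) (ZMod 2))
    (hT : T * Tinv = 1) (hT' : Tinv * T = 1)
    (A : Matrix (Fin (Ni * n)) (Fin (N * n)) (ZMod 2))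
    (B : Matrix (Fin (No * n)) (Fin (N * n)) (ZMod 2))
    (hA : A.rank = Ni * n)
    (hperp : A * Bᵀ = 0)
    (RA : Matrix (Fin (N * n)) (Fin (Ni * n)) (ZMod 2))
    (hRA : A * RA = 1)
    (α β : Fin (N * n) → ZMod 2) :
    (α + Tᵀ.mulVec β ∉ Set.range Aᵀ.mulVec →
      corr (fun x : Fin (N * n) → ZMod 2 => T.mulVec (x + Bᵀ.mulVec (f (A.mulVec x)))) α β
        = 0) ∧
    (α + Tᵀ.mulVec β ∈ Set.range Aᵀ.mulVec →
      corr (fun x : Fin (N * n) → ZMod 2 => T.mulVec (x + Bᵀ.mulVec (f (A.mulVec x)))) α β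
        = corr f (RAᵀ.mulVec (α + Tᵀ.mulVec β)) (B.mulVec (Tᵀ.mulVec β))) := by
  set γ : Fin (N * n) → ZMod 2 := α + Tᵀ.mulVec β with hγdef
  set w : Fin (No * n) → ZMod 2 := B.mulVec (Tᵀ.mulVec β) with hwdef
  have hexp : ∀ x : Fin (N * n) → ZMod 2,
      β ⬝ᵥ (T.mulVec (x + Bᵀ.mulVec (f (A.mulVec x)))) + α ⬝ᵥ x
        = γ ⬝ᵥ x + w ⬝ᵥ f (A.mulVec x) := by
    intro x
    rw [Matrix.mulVec_add, dotProduct_add, ← tdot T β x, ← tdot T β, tdot' B]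
    show Tᵀ.mulVec β ⬝ᵥ x + B.mulVec (Tᵀ.mulVec β) ⬝ᵥ f (A.mulVec x) + α ⬝ᵥ x
        = (α + Tᵀ.mulVec β) ⬝ᵥ x + B.mulVec (Tᵀ.mulVec β) ⬝ᵥ f (A.mulVec x)
    rw [add_dotProduct]; ring
  have hcorrF : corr (fun x : Fin (N * n) → ZMod 2
        => T.mulVec (x + Bᵀ.mulVec (f (A.mulVec x)))) α β
      = ((∑ k : {k : Fin (N * n) → ZMod 2 // A.mulVec k = 0}, chi (γ ⬝ᵥ k.1))
        * ∑ y : Fin (Ni * n) → ZMod 2, chi (γ ⬝ᵥ RA.mulVec y + w ⬝ᵥ f y)) / 2 ^ (N * n) := by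
    unfold corr
    congr 1
    rw [← sum_factor A RA hRA f γ w]
    exact Finset.sum_congr rfl fun x _ => by rw [hexp x]
  constructor
  · intro hnot
    have hne : ¬ ∀ k, A.mulVec k = 0 → γ ⬝ᵥ k = 0 := by
      intro h
      exact hnot ⟨RAᵀ.mulVec γ, range_of_perp A RA hRA γ h⟩
    push_neg at hne
    obtain ⟨k0, hk0, hk0ne⟩ := hne
    rw [hcorrF, K_zero A γ k0 hk0 hk0ne, zero_mul, zero_div]
  · intro hmem
    have hperp' := perp_of_range A γ hmem
    have hK : (∑ k : {k : Fin (N * n) → ZMod 2 // A.mulVec k = 0}, chi (γ ⬝ᵥ k.1))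
        = (Fintype.card {k : Fin (N * n) → ZMod 2 // A.mulVec k = 0} : ℝ) := by
      rw [Finset.sum_congr rfl (fun k _ => by rw [hperp' k.1 k.2, chi_zero])]
      simp
    have hcard : (2 : ℝ) ^ (Ni * n)
        * (Fintype.card {k : Fin (N * n) → ZMod 2 // A.mulVec k = 0} : ℝ)
        = 2 ^ (N * n) := by
      have := Fintype.card_congr (kerEquiv A RA hRA)
      rw [Fintype.card_prod] at this
      have h2 : ∀ m : ℕ, Fintype.card (Fin m → ZMod 2) = 2 ^ m := by
        intro m; simp [Fintype.card_fun]
      rw [h2, h2] at this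
      exact_mod_cast this
    have hinner : ∀ y : Fin (Ni * n) → ZMod 2,
        chi (γ ⬝ᵥ RA.mulVec y + w ⬝ᵥ f y)
          = chi (w ⬝ᵥ f y + RAᵀ.mulVec γ ⬝ᵥ y) := by
      intro y; rw [tdot, add_comm]
    have hsum : ∑ y : Fin (Ni * n) → ZMod 2, chi (γ ⬝ᵥ RA.mulVec y + w ⬝ᵥ f y)
        = ∑ y : Fin (Ni * n) → ZMod 2, chi (w ⬝ᵥ f y + RAᵀ.mulVec γ ⬝ᵥ y) :=
      Finset.sum_congr rfl fun y _ => hinner y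
    rw [hcorrF, hK, hsum]
    unfold corr
    set S := ∑ y : Fin (Ni * n) → ZMod 2, chi (w ⬝ᵥ f y + RAᵀ.mulVec γ ⬝ᵥ y) with hSdef
    rw [div_eq_div_iff (by positivity) (by positivity)]
    calc (Fintype.card {k : Fin (N * n) → ZMod 2 // A.mulVec k = 0} : ℝ) * S * 2 ^ (Ni * n)
        = S * (2 ^ (Ni * n) * (Fintype.card {k : Fin (N * n) → ZMod 2 // A.mulVec k = 0} : ℝ))
          := by ring
      _ = S * 2 ^ (N * n) := by rw [hcard]
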